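/- (Berlekamp–Graver eventown theorem) If F is an eventown family of subsets of [n], then |F| ≤ 2^{⌊n/2⌋}. -/

import Mathlib

open Finset Module


/-- Berlekamp–Graver eventown theorem: if all pairwise intersections (including
self-intersections) of members of `F ⊆ 2^[n]` have even size, then `|F| ≤ 2^⌊n/2⌋`. -/
theorem stmt_3 {n : ℕ} (F : Finset (Finset (Fin n)))
    (hF : ∀ f₁ ∈ F, ∀ f₂ ∈ F, Even (f₁ ∩ f₂).card) :
    F.card ≤ 2 ^ (n / 2) := by
  classical
  -- indicator vector
  let ind : Finset (Fin n) → Fin n → ZMod 2 := fun f i => if i ∈ f then 1 else 0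
  have ind_inj : Function.Injective ind := by
    intro f g h
    ext i
    have := congrFun h i
    simp only [ind] at this
    by_cases hf : i ∈ f <;> by_cases hg : i ∈ g <;> simp_all
  -- the dot product bilinear form
  let B : LinearMap.BilinForm (ZMod 2) (Fin n → ZMod 2) :=
    LinearMap.mk₂ (ZMod 2) (fun x y => ∑ i, x i * y i)
      (by intro x x' y; simp [Pi.add_apply, add_mul, Finset.sum_add_distrib])
      (by intro c x y; simp [Pi.smul_apply, smul_eq_mul, mul_assoc, Finset.mul_sum])
      (by intro x y y'; simp [Pi.add_apply, mul_add, Finset.sum_add_distrib])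
      (by intro c x y
          simp only [Pi.smul_apply, smul_eq_mul]
          rw [Finset.mul_sum]; congr 1; ext i; ring)
  have hBapp : ∀ x y : Fin n → ZMod 2, B x y = ∑ i, x i * y i := fun _ _ => rfl
  have hrefl : B.IsRefl := by
    intro x y h
    rw [hBapp] at h ⊢
    simpa [mul_comm] using h
  have hnd : B.Nondegenerate := by
    refine hrefl.nondegenerate_iff_separatingLeft.mpr ?_
    intro x hx
    funext i
    have := hx (Pi.single i 1)
    rw [hBapp] at this
    simpa [Pi.single_apply] using this
  -- generators are pairwise orthogonal
  have horth : ∀ f₁ ∈ F, ∀ f₂ ∈ F, B (ind f₁) (ind f₂) = 0 := by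
    intro f₁ h₁ f₂ h₂
    rw [hBapp]
    have : ∀ i, ind f₁ i * ind f₂ i = if i ∈ f₁ ∩ f₂ then (1 : ZMod 2) else 0 := by
      intro i
      simp only [ind, Finset.mem_inter]
      by_cases h : i ∈ f₁ <;> by_cases h' : i ∈ f₂ <;> simp [h, h']
    rw [Finset.sum_congr rfl fun i _ => this i]
    rw [Finset.sum_ite_mem, Finset.univ_inter, Finset.sum_const, nsmul_eq_mul, mul_one]
    have := hF f₁ h₁ f₂ h₂
    obtain ⟨k, hk⟩ := this
    rw [hk]
    push_cast
    ring_nf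
    rw [show (k : ZMod 2) * 2 = k * 2 from rfl, show (2 : ZMod 2) = 0 from rfl, mul_zero]
  -- the span
  set S : Set (Fin n → ZMod 2) := ↑(F.image ind) with hS
  set W : Submodule (ZMod 2) (Fin n → ZMod 2) := Submodule.span (ZMod 2) S with hW
  have hsub : W ≤ B.orthogonal W := by
    rw [hW, Submodule.span_le]
    intro x hx
    simp only [hS, Finset.coe_image, Set.mem_image, Finset.mem_coe] at hx
    obtain ⟨f, hf, rfl⟩ := hx
    intro y hy
    -- show B y (ind f) = 0 for all y ∈ W
    have : W ≤ LinearMap.ker (B.flip (ind f)) := by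
      rw [hW, Submodule.span_le]
      intro z hz
      simp only [hS, Finset.coe_image, Set.mem_image, Finset.mem_coe] at hz
      obtain ⟨g, hg, rfl⟩ := hz
      simpa using horth g hg f hf
    have := this hy
    simpa using this
  have hdim : finrank (ZMod 2) W ≤ n / 2 := by
    have h1 : finrank (ZMod 2) W ≤ finrank (ZMod 2) (B.orthogonal W) :=
      Submodule.finrank_mono hsub
    have h2 : finrank (ZMod 2) (B.orthogonal W) = finrank (ZMod 2) (Fin n → ZMod 2) - finrank (ZMod 2) W :=
      LinearMap.BilinForm.finrank_orthogonal hnd W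
    have h3 : finrank (ZMod 2) (Fin n → ZMod 2) = n := by simp
    omega
  -- cardinality count
  have hcard : F.card ≤ Fintype.card W := by
    have : Function.Injective (fun f : F => (⟨ind f, Submodule.subset_span (by
        simp only [hS, Finset.coe_image, Set.mem_image, Finset.mem_coe]
        exact ⟨f, f.2, rfl⟩)⟩ : W)) := by
      intro a b h
      have : ind a = ind b := congrArg Subtype.val h
      exact Subtype.ext (ind_inj this)
    calc F.card = Fintype.card F := (Fintype.card_coe F).symm
      _ ≤ Fintype.card W := Fintype.card_le_of_injective _ this
  have hcardW : Fintype.card W = 2 ^ finrank (ZMod 2) W := by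
    have := card_eq_pow_finrank (K := ZMod 2) (V := W)
    simpa [ZMod.card] using this
  calc F.card ≤ Fintype.card W := hcard
    _ = 2 ^ finrank (ZMod 2) W := hcardW
    _ ≤ 2 ^ (n / 2) := Nat.pow_le_pow_right (by norm_num) hdim
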